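/- Second-order bound in the Lindeberg step (inequality (3.17)). Let h : ℝ → ℝ be twice continuously differentiable and let ϰ > 0, κ > 0. Then for every x ∈ ℝ, Ê[h''(x)·ξ(x)²] − h''(x) ≤ κ(σ̄²/σ̲² − 1). -/

import Mathlib

open MeasureTheory ProbabilityTheory Set
open scoped ENNReal NNReal

noncomputable section

/-- A sublinear expectation space on a set `H` of real random variables. -/
structure SublinearExp (Ω : Type) where
  H : Set (Ω → ℝ)
  E : (Ω → ℝ) → ℝ
  const_mem : ∀ c : ℝ, (fun _ => c) ∈ H
  add_mem : ∀ {X Y : Ω → ℝ}, X ∈ H → Y ∈ H → X + Y ∈ H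
  smul_mem : ∀ (c : ℝ) {X : Ω → ℝ}, X ∈ H → c • X ∈ H
  mono : ∀ {X Y : Ω → ℝ}, X ∈ H → Y ∈ H → (∀ ω, X ω ≤ Y ω) → E X ≤ E Y
  const_eq : ∀ c : ℝ, E (fun _ => c) = c
  subadd : ∀ {X Y : Ω → ℝ}, X ∈ H → Y ∈ H → E (X + Y) ≤ E X + E Y
  homog : ∀ {c : ℝ}, 0 ≤ c → ∀ {X : Ω → ℝ}, X ∈ H → E (c • X) = c * E X

variable {Ω : Type}

/-- Upper expectation `Ê[Y]` of an arbitrary function, with value `+∞` if no dominating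
element of `H` exists (`EReal`-valued). -/
def SublinearExp.uexpE (SE : SublinearExp Ω) (Y : Ω → ℝ) : EReal :=
  sInf {r : EReal | ∃ X ∈ SE.H, (∀ ω, Y ω ≤ X ω) ∧ r = (SE.E X : EReal)}

def muLow (SE : SublinearExp Ω) (X₀ : Ω → ℝ) : ℝ := -(SE.E fun ω => -X₀ ω)
def muHigh (SE : SublinearExp Ω) (X₀ : Ω → ℝ) : ℝ := SE.E X₀
def varLow (SE : SublinearExp Ω) (X₀ : Ω → ℝ) (μ : ℝ) : ℝ :=
  -(SE.E fun ω => -((X₀ ω - μ) ^ 2))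
def varHigh (SE : SublinearExp Ω) (X₀ : Ω → ℝ) (μ : ℝ) : ℝ :=
  SE.E fun ω => (X₀ ω - μ) ^ 2
def sigLow (SE : SublinearExp Ω) (X₀ : Ω → ℝ) : ℝ :=
  sInf ((fun μ => Real.sqrt (varLow SE X₀ μ)) '' Set.Icc (muLow SE X₀) (muHigh SE X₀))
def sigHigh (SE : SublinearExp Ω) (X₀ : Ω → ℝ) : ℝ :=
  sSup ((fun μ => Real.sqrt (varHigh SE X₀ μ)) '' Set.Icc (muLow SE X₀) (muHigh SE X₀))

/-- The function `α_ϰ(x|h)` of (3.1)–(3.2), written in terms of `h'`. -/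
def alphaF (SE : SublinearExp Ω) (X₀ : Ω → ℝ) (ϰ : ℝ) (h' : ℝ → ℝ) (x : ℝ) : ℝ :=
  if |h' x| ≤ ϰ then
    (muHigh SE X₀ + muLow SE X₀) / 2 + (muHigh SE X₀ - muLow SE X₀) / 2 * (h' x / ϰ)
  else if ϰ < h' x then muHigh SE X₀
  else muLow SE X₀

/-- The function `β_{ϰ,κ}(x|h)` of (3.3)–(3.4), written in terms of `h'` and `h''`. -/
def betaF (SE : SublinearExp Ω) (X₀ : Ω → ℝ) (ϰ κ : ℝ) (h' h'' : ℝ → ℝ) (x : ℝ) : ℝ :=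
  Real.sqrt (
    if |h'' x| ≤ κ then
      (varHigh SE X₀ (alphaF SE X₀ ϰ h' x) + varLow SE X₀ (alphaF SE X₀ ϰ h' x)) / 2 +
        (varHigh SE X₀ (alphaF SE X₀ ϰ h' x) - varLow SE X₀ (alphaF SE X₀ ϰ h' x)) / 2 *
          (h'' x / κ)
    else if κ < h'' x then varHigh SE X₀ (alphaF SE X₀ ϰ h' x)
    else varLow SE X₀ (alphaF SE X₀ ϰ h' x))

/-- `ξ(x) = (X₀ - α_ϰ(x|h))/β_{ϰ,κ}(x|h)`. -/
def xiF (SE : SublinearExp Ω) (X₀ : Ω → ℝ) (ϰ κ : ℝ) (h' h'' : ℝ → ℝ) (x : ℝ) (ω : Ω) : ℝ :=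
  (X₀ ω - alphaF SE X₀ ϰ h' x) / betaF SE X₀ ϰ κ h' h'' x


lemma SE_memNeg (SE : SublinearExp Ω) {X : Ω → ℝ} (hX : X ∈ SE.H) :
    (fun ω => -(X ω)) ∈ SE.H := by
  have hh : (fun ω => -(X ω)) = (-1 : ℝ) • X := by
    funext ω; simp
  rw [hh]; exact SE.smul_mem _ hX

lemma SE_memQ (SE : SublinearExp Ω) (X₀ : Ω → ℝ)
    (hX₀ : X₀ ∈ SE.H) (hX₀sq : (fun ω => (X₀ ω) ^ 2) ∈ SE.H) (a : ℝ) :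
    (fun ω => (X₀ ω - a) ^ 2) ∈ SE.H := by
  have h1 : (fun ω => (X₀ ω - a) ^ 2) =
      ((fun ω => (X₀ ω) ^ 2) + (-2 * a) • X₀ + (fun _ => a ^ 2)) := by
    funext ω
    simp only [Pi.add_apply, Pi.smul_apply, smul_eq_mul]
    ring
  rw [h1]
  exact SE.add_mem (SE.add_mem hX₀sq (SE.smul_mem _ hX₀)) (SE.const_mem _)

lemma SE_E_t_sq (SE : SublinearExp Ω) (X₀ : Ω → ℝ)
    (hX₀ : X₀ ∈ SE.H) (hX₀sq : (fun ω => (X₀ ω) ^ 2) ∈ SE.H) (a t : ℝ) :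
    SE.E (fun ω => t * (X₀ ω - a) ^ 2)
      = if 0 ≤ t then t * varHigh SE X₀ a else t * varLow SE X₀ a := by
  have hQ := SE_memQ SE X₀ hX₀ hX₀sq a
  by_cases ht : 0 ≤ t
  · simp only [ht, if_true]
    have h1 : (fun ω => t * (X₀ ω - a) ^ 2) = t • (fun ω => (X₀ ω - a) ^ 2) := by
      funext ω; simp [smul_eq_mul]
    rw [h1, SE.homog ht hQ]
    rfl
  · simp only [ht, if_false]
    push_neg at ht
    have hQn := SE_memNeg SE hQ
    have h1 : (fun ω => t * (X₀ ω - a) ^ 2) =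
        (-t) • (fun ω => -((X₀ ω - a) ^ 2)) := by
      funext ω; simp only [Pi.smul_apply, smul_eq_mul]; ring
    rw [h1, SE.homog (by linarith) hQn]
    unfold varLow; ring

lemma SE_muLow_le (SE : SublinearExp Ω) (X₀ : Ω → ℝ) (hX₀ : X₀ ∈ SE.H) :
    muLow SE X₀ ≤ muHigh SE X₀ := by
  have hn : (fun ω => -(X₀ ω)) ∈ SE.H := SE_memNeg SE hX₀
  have h0 : (X₀ + fun ω => -(X₀ ω)) = (fun _ => (0 : ℝ)) := by
    funext ω; simp
  have hsub := SE.subadd hX₀ hn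
  rw [h0, SE.const_eq] at hsub
  unfold muLow muHigh
  have : SE.E (fun ω => -X₀ ω) = SE.E (fun ω => -(X₀ ω)) := rfl
  linarith [hsub]

lemma SE_varLow_nonneg (SE : SublinearExp Ω) (X₀ : Ω → ℝ)
    (hX₀ : X₀ ∈ SE.H) (hX₀sq : (fun ω => (X₀ ω) ^ 2) ∈ SE.H) (a : ℝ) :
    0 ≤ varLow SE X₀ a := by
  have hQ := SE_memQ SE X₀ hX₀ hX₀sq a
  have hQn := SE_memNeg SE hQ
  have hmono := SE.mono hQn (SE.const_mem 0) (fun ω => neg_nonpos.mpr (sq_nonneg _))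
  rw [SE.const_eq] at hmono
  unfold varLow
  have : SE.E (fun ω => -((X₀ ω - a) ^ 2)) ≤ 0 := hmono
  linarith

lemma SE_varLow_le_varHigh (SE : SublinearExp Ω) (X₀ : Ω → ℝ)
    (hX₀ : X₀ ∈ SE.H) (hX₀sq : (fun ω => (X₀ ω) ^ 2) ∈ SE.H) (a : ℝ) :
    varLow SE X₀ a ≤ varHigh SE X₀ a := by
  have hQ := SE_memQ SE X₀ hX₀ hX₀sq a
  have hQn := SE_memNeg SE hQ
  have h0 : ((fun ω => (X₀ ω - a) ^ 2) + fun ω => -((X₀ ω - a) ^ 2)) =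
      (fun _ => (0 : ℝ)) := by
    funext ω; simp
  have hsub := SE.subadd hQ hQn
  rw [h0, SE.const_eq] at hsub
  unfold varLow varHigh
  linarith

/-- **Inequality (3.17)**: second-order bound in the Lindeberg step,
`Ê[h''(x) ξ(x)²] - h''(x) ≤ κ(σ̄²/σ̲² - 1)`. -/
theorem lindeberg_second_order_bound
    {Ω : Type} (SE : SublinearExp Ω) (X₀ : Ω → ℝ)
    (hX₀ : X₀ ∈ SE.H) (hX₀sq : (fun ω => (X₀ ω) ^ 2) ∈ SE.H)
    (hσlow : 0 < sigLow SE X₀)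
    (hσhigh : BddAbove
      ((fun μ => Real.sqrt (varHigh SE X₀ μ)) '' Set.Icc (muLow SE X₀) (muHigh SE X₀)))
    (h h' h'' : ℝ → ℝ)
    (hd1 : ∀ x, HasDerivAt h (h' x) x) (hd2 : ∀ x, HasDerivAt h' (h'' x) x)
    (hcont : Continuous h'')
    (ϰ κ : ℝ) (hϰ : 0 < ϰ) (hκ : 0 < κ) (x : ℝ) :
    SE.uexpE (fun ω => h'' x * xiF SE X₀ ϰ κ h' h'' x ω ^ 2) - ((h'' x : ℝ) : EReal)
      ≤ ((κ * (sigHigh SE X₀ ^ 2 / sigLow SE X₀ ^ 2 - 1) : ℝ) : EReal) := by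
  classical
  set α := alphaF SE X₀ ϰ h' x with hαdef
  set vl := varLow SE X₀ α with hvldef
  set vh := varHigh SE X₀ α with hvhdef
  set c := h'' x with hcdef
  set B : ℝ :=
    (if |c| ≤ κ then (vh + vl) / 2 + (vh - vl) / 2 * (c / κ)
     else if κ < c then vh else vl) with hBdef
  -- α ∈ Icc
  have hμ := SE_muLow_le SE X₀ hX₀
  have hαmem : α ∈ Set.Icc (muLow SE X₀) (muHigh SE X₀) := by
    rw [hαdef]
    unfold alphaF
    split_ifs with h1 h2
    · rw [abs_le] at h1
      have ht1 : -1 ≤ h' x / ϰ := by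
        rw [le_div_iff₀ hϰ]; linarith
      have ht2 : h' x / ϰ ≤ 1 := by
        rw [div_le_one hϰ]; linarith
      constructor <;> nlinarith
    · exact ⟨hμ, le_refl _⟩
    · exact ⟨le_refl _, hμ⟩
  -- basic variance facts
  have hvl0 : 0 ≤ vl := SE_varLow_nonneg SE X₀ hX₀ hX₀sq α
  have hvlvh : vl ≤ vh := SE_varLow_le_varHigh SE X₀ hX₀ hX₀sq α
  set s := sigLow SE X₀ ^ 2 with hsdef
  set S := sigHigh SE X₀ ^ 2 with hSdef
  have hspos : 0 < s := by positivity
  -- s ≤ vl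
  have hsvl : s ≤ vl := by
    have hbdd : BddBelow
        ((fun μ => Real.sqrt (varLow SE X₀ μ)) '' Set.Icc (muLow SE X₀) (muHigh SE X₀)) := by
      refine ⟨0, ?_⟩
      rintro y ⟨μ, _, rfl⟩
      exact Real.sqrt_nonneg _
    have hmem : Real.sqrt (varLow SE X₀ α) ∈
        ((fun μ => Real.sqrt (varLow SE X₀ μ)) '' Set.Icc (muLow SE X₀) (muHigh SE X₀)) :=
      ⟨α, hαmem, rfl⟩
    have hle : sigLow SE X₀ ≤ Real.sqrt (varLow SE X₀ α) := csInf_le hbdd hmem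
    have hsq : Real.sqrt (varLow SE X₀ α) ^ 2 = varLow SE X₀ α := Real.sq_sqrt hvl0
    have := pow_le_pow_left₀ hσlow.le hle 2
    rw [hsq] at this
    exact this
  -- vh ≤ S
  have hvhS : vh ≤ S := by
    have hmem : Real.sqrt (varHigh SE X₀ α) ∈
        ((fun μ => Real.sqrt (varHigh SE X₀ μ)) '' Set.Icc (muLow SE X₀) (muHigh SE X₀)) :=
      ⟨α, hαmem, rfl⟩
    have hle : Real.sqrt (varHigh SE X₀ α) ≤ sigHigh SE X₀ := le_csSup hσhigh hmem
    have hvh0 : 0 ≤ vh := le_trans hvl0 hvlvh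
    have hsq : Real.sqrt (varHigh SE X₀ α) ^ 2 = varHigh SE X₀ α := Real.sq_sqrt hvh0
    have hσh0 : 0 ≤ sigHigh SE X₀ := le_trans (Real.sqrt_nonneg _) hle
    have := pow_le_pow_left₀ (Real.sqrt_nonneg _) hle 2
    rw [hsq] at this
    exact this
  -- bounds on B
  have hBl : vl ≤ B := by
    rw [hBdef]
    split_ifs with h1 h2
    · rw [abs_le] at h1
      have ht1 : -1 ≤ c / κ := by rw [le_div_iff₀ hκ]; linarith
      nlinarith
    · exact hvlvh
    · exact le_refl _
  have hBu : B ≤ vh := by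
    rw [hBdef]
    split_ifs with h1 h2
    · rw [abs_le] at h1
      have ht2 : c / κ ≤ 1 := by rw [div_le_one hκ]; linarith
      nlinarith
    · exact le_refl _
    · exact hvlvh
  have hBpos : 0 < B := lt_of_lt_of_le hspos (le_trans hsvl hBl)
  have hsS : s ≤ S := le_trans hsvl (le_trans (le_trans hBl hBu) hvhS)
  have hRHS0 : 0 ≤ κ * (S - s) := by nlinarith
  -- rewrite Y
  set Y := (fun ω => h'' x * xiF SE X₀ ϰ κ h' h'' x ω ^ 2) with hYdef
  have hbetaB : betaF SE X₀ ϰ κ h' h'' x = Real.sqrt B := by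
    rw [hBdef]; unfold betaF; rfl
  have hYeq : Y = fun ω => (c / B) * (X₀ ω - α) ^ 2 := by
    funext ω
    simp only [hYdef, xiF]
    rw [hbetaB, div_pow, Real.sq_sqrt hBpos.le]
    field_simp
    rfl
  have hEY : SE.E Y = if 0 ≤ c / B then (c / B) * vh else (c / B) * vl := by
    rw [hYeq, SE_E_t_sq SE X₀ hX₀ hX₀sq α (c / B)]
  -- membership of Y
  have hYmem : Y ∈ SE.H := by
    rw [hYeq]
    have h1 : (fun ω => (c / B) * (X₀ ω - α) ^ 2)
        = (c / B) • (fun ω => (X₀ ω - α) ^ 2) := by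
      funext ω; simp [smul_eq_mul]
    rw [h1]
    exact SE.smul_mem _ (SE_memQ SE X₀ hX₀ hX₀sq α)
  -- uexpE ≤ E Y
  have huexp : SE.uexpE Y ≤ (SE.E Y : EReal) := by
    apply sInf_le
    exact ⟨Y, hYmem, fun ω => le_refl _, rfl⟩
  -- the real inequality
  have hreal : SE.E Y - c ≤ κ * (S / s - 1) := by
    have hrhs_eq : κ * (S / s - 1) = κ * (S - s) / s := by
      field_simp
    by_cases hc : 0 ≤ c
    · have hcb : 0 ≤ c / B := div_nonneg hc hBpos.le
      rw [hEY, if_pos hcb]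
      have hkey : c * (vh - B) ≤ κ * (S - s) := by
        by_cases h1 : |c| ≤ κ
        · rw [abs_le] at h1
          have hgap : vh - B ≤ S - s := by linarith
          have h0 : 0 ≤ vh - B := by linarith
          exact mul_le_mul h1.2 hgap h0 hκ.le
        · have hcκ : κ < c := by
            rw [abs_of_nonneg hc] at h1; linarith
          have hBvh : B = vh := by
            rw [hBdef, if_neg h1, if_pos hcκ]
          rw [hBvh]; simpa using hRHS0
      have heq : c / B * vh - c = c * (vh - B) / B := by
        field_simp
      rw [heq, hrhs_eq]
      exact div_le_div₀ hRHS0 hkey hspos (le_trans hsvl hBl)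
    · push_neg at hc
      have hcb : ¬ (0 ≤ c / B) := by
        rw [not_le]
        exact div_neg_of_neg_of_pos hc hBpos
      rw [hEY, if_neg hcb]
      have hkey : (-c) * (B - vl) ≤ κ * (S - s) := by
        by_cases h1 : |c| ≤ κ
        · rw [abs_le] at h1
          have hgap : B - vl ≤ S - s := by linarith
          have h0 : 0 ≤ B - vl := by linarith
          exact mul_le_mul (by linarith : -c ≤ κ) hgap h0 hκ.le
        · have hcκ : ¬ (κ < c) := by linarith
          have hBvl : B = vl := by
            rw [hBdef, if_neg h1, if_neg hcκ]
          rw [hBvl]; simpa using hRHS0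
      have heq : c / B * vl - c = (-c) * (B - vl) / B := by
        field_simp; ring
      rw [heq, hrhs_eq]
      exact div_le_div₀ hRHS0 hkey hspos (le_trans hsvl hBl)
  -- conclude in EReal
  clear_value B S s vh vl α
  have hfin : ((SE.E Y : ℝ) : EReal) - ((c : ℝ) : EReal)
      ≤ ((κ * (S / s - 1) : ℝ) : EReal) := by
    rw [← EReal.coe_sub]
    exact EReal.coe_le_coe_iff.mpr hreal
  exact le_trans (EReal.sub_le_sub huexp (le_refl _)) hfin

end
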